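/- Every prime ideal P of the ring B₁(X) of Baire one functions on a topological space X is absolutely convex: if f ∈ B₁(X), g ∈ P, and |f| ≤ |g| pointwise, then f ∈ P. -/

import Mathlib

private lemma stmt19_Qbound (a b : ℝ) : |a ^ 2 / (|a| ⊔ |b|)| ≤ |a| := by
  by_cases hm : |a| ⊔ |b| = 0
  · simp [hm, abs_nonneg]
  · have hm' : 0 < |a| ⊔ |b| :=
      lt_of_le_of_ne (le_trans (abs_nonneg a) le_sup_left) (Ne.symm hm)
    rw [abs_of_nonneg (div_nonneg (sq_nonneg a) hm'.le), div_le_iff₀ hm']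
    calc a ^ 2 = |a| * |a| := by rw [← sq_abs]; ring
    _ ≤ |a| * (|a| ⊔ |b|) :=
      mul_le_mul_of_nonneg_left le_sup_left (abs_nonneg a)

private lemma stmt19_Qcont : Continuous fun p : ℝ × ℝ => p.1 ^ 2 / (|p.1| ⊔ |p.2|) := by
  rw [continuous_iff_continuousAt]
  intro p
  by_cases hp : |p.1| ⊔ |p.2| = 0
  · have h1 : |p.1| = 0 :=
      le_antisymm (hp ▸ le_sup_left) (abs_nonneg _)
    have hval : p.1 ^ 2 / (|p.1| ⊔ |p.2|) = 0 := by simp [hp]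
    have hmain : Filter.Tendsto (fun q : ℝ × ℝ => q.1 ^ 2 / (|q.1| ⊔ |q.2|))
        (nhds p) (nhds 0) := by
      refine squeeze_zero_norm (a := fun q : ℝ × ℝ => |q.1|) (fun q => ?_) ?_
      · simpa only [Real.norm_eq_abs] using stmt19_Qbound q.1 q.2
      · have := (continuous_abs.comp continuous_fst).tendsto p
        simpa [h1, Function.comp_def] using this
    simpa [ContinuousAt, hval] using hmain
  · exact ContinuousAt.div (by fun_prop) (by fun_prop) hp

set_option maxHeartbeats 1000000 in
/-- every prime ideal of `B₁(X)` is absolutely convex. -/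
theorem stmt_19 {X : Type*} [TopologicalSpace X] [Nonempty X]
    (B : Subring (X → ℝ))
    (hB : ∀ f : X → ℝ, f ∈ B ↔ ∃ u : ℕ → C(X, ℝ),
      ∀ x, Filter.Tendsto (fun n => (u n) x) Filter.atTop (nhds (f x)))
    (P : Ideal B) (hP : P.IsPrime)
    (f g : B) (hg : g ∈ P) (hfg : ∀ x, |f.1 x| ≤ |g.1 x|) :
    f ∈ P := by
  -- sequences of continuous functions converging to f and g
  obtain ⟨fu, hfu⟩ := (hB f.1).mp f.2
  obtain ⟨gu, hgu⟩ := (hB g.1).mp g.2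
  -- the quotient function is Baire one
  have hkB : (fun x => f.1 x ^ 2 / (|f.1 x| ⊔ |g.1 x|)) ∈ B := by
    rw [hB]
    refine ⟨fun n => ⟨fun x => (fu n x) ^ 2 / (|fu n x| ⊔ |gu n x|), ?_⟩, ?_⟩
    · exact stmt19_Qcont.comp ((fu n).continuous.prodMk (gu n).continuous)
    · intro x
      have hprod : Filter.Tendsto (fun n => (fu n x, gu n x)) Filter.atTop
          (nhds (f.1 x, g.1 x)) := (hfu x).prodMk_nhds (hgu x)
      exact (stmt19_Qcont.tendsto (f.1 x, g.1 x)).comp hprod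
  refine hP.mem_of_pow_mem 4 ?_
  have hkey : f ^ 4 = g * (g * ((⟨_, hkB⟩ : B) * (⟨_, hkB⟩ : B))) := by
    apply Subtype.ext
    rw [SubmonoidClass.coe_pow, MulMemClass.coe_mul, MulMemClass.coe_mul,
      MulMemClass.coe_mul]
    funext x
    simp only [Pi.pow_apply, Pi.mul_apply]
    show f.1 x ^ 4 = g.1 x * (g.1 x *
      (f.1 x ^ 2 / (|f.1 x| ⊔ |g.1 x|) * (f.1 x ^ 2 / (|f.1 x| ⊔ |g.1 x|))))
    have hsup : |f.1 x| ⊔ |g.1 x| = |g.1 x| := sup_eq_right.mpr (hfg x)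
    rw [hsup]
    by_cases hgx : g.1 x = 0
    · have hfx : f.1 x = 0 := by
        have := hfg x
        rw [hgx, abs_zero] at this
        exact abs_eq_zero.mp (le_antisymm this (abs_nonneg _))
      simp [hgx, hfx]
    · have habs : |g.1 x| ≠ 0 := abs_ne_zero.mpr hgx
      field_simp
      rw [sq_abs]
  rw [hkey]
  exact Ideal.mul_mem_right _ _ hg
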